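/- Let v(t,x) := (1/√(4πt)) ∫₀^∞ (e^{−(x−y)²/(4t)} − e^{−(x+y)²/(4t)}) v₀(y) dy for t > 0, x > 0, where v₀(x) = 1 for 0 < x ≤ 1 and v₀(x) = 1/x² for x > 1. Then v(t, 2√t) / ((ln t)/(2t)) → e^{−1}/√π as t → +∞; that is, v(t, 2√t) ∼ (e^{−1}/√π)·(ln t)/(2t) as t → +∞. -/

import Mathlib

open Real Filter MeasureTheory Set

noncomputable section

/-- The initial datum `v₀(x) = 1` for `0 < x ≤ 1`, `v₀(x) = 1/x²` for `x > 1`. -/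
def v₀ (x : ℝ) : ℝ := if x ≤ 1 then 1 else 1 / x ^ 2

/-- The solution of the Dirichlet heat equation on the half-line with initial datum `v₀`. -/
def vheat (t x : ℝ) : ℝ :=
  (Real.sqrt (4 * Real.pi * t))⁻¹ *
    ∫ y in Set.Ioi (0 : ℝ),
      (Real.exp (-(x - y) ^ 2 / (4 * t)) - Real.exp (-(x + y) ^ 2 / (4 * t))) * v₀ y


def gk (s : ℝ) : ℝ := Real.exp (-(1 - s) ^ 2) - Real.exp (-(1 + s) ^ 2)

lemma gk_eq (s : ℝ) : gk s = Real.exp (-1) * (Real.exp (-s^2) * (2 * Real.sinh (2*s))) := by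
  rw [gk, Real.sinh_eq, show -(1-s)^2 = (-1) + (-s^2) + (2*s) by ring,
    show -(1+s)^2 = (-1) + (-s^2) + (-(2*s)) by ring, Real.exp_add, Real.exp_add,
    Real.exp_add, Real.exp_add]
  ring

lemma gk_nonneg {s : ℝ} (hs : 0 ≤ s) : 0 ≤ gk s := by
  have : Real.exp (-(1+s)^2) ≤ Real.exp (-(1-s)^2) := by
    apply Real.exp_le_exp.2; nlinarith
  simpa [gk] using sub_nonneg.2 this

lemma gk_le_one (s : ℝ) : gk s ≤ 1 := by
  have h1 : Real.exp (-(1-s)^2) ≤ 1 := Real.exp_le_one_iff.2 (by nlinarith)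
  have h2 : 0 < Real.exp (-(1+s)^2) := Real.exp_pos _
  simp only [gk]; linarith

lemma gk_le_linear {s : ℝ} (hs : 0 ≤ s) : gk s ≤ 4 * s := by
  have h1 : Real.exp (-(1+s)^2) = Real.exp (-(1-s)^2) * Real.exp ((1-s)^2 - (1+s)^2) := by
    rw [← Real.exp_add]; ring_nf
  have h2 : ((1-s)^2 - (1+s)^2) + 1 ≤ Real.exp ((1-s)^2 - (1+s)^2) := Real.add_one_le_exp _
  have h3 : Real.exp (-(1-s)^2) ≤ 1 := Real.exp_le_one_iff.2 (by nlinarith)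
  have h4 : 0 < Real.exp (-(1-s)^2) := Real.exp_pos _
  simp only [gk]
  nlinarith

lemma sinh_le_mul_cosh {y : ℝ} (hy : 0 ≤ y) : Real.sinh y ≤ y * Real.cosh y := by
  have key : MonotoneOn (fun y => y * Real.cosh y - Real.sinh y) (Ici (0:ℝ)) := by
    apply monotoneOn_of_deriv_nonneg (convex_Ici 0)
    · exact ((continuous_id.mul Real.continuous_cosh).sub Real.continuous_sinh).continuousOn
    · exact fun x hx => (((differentiable_id.mul Real.differentiable_cosh).sub
        Real.differentiable_sinh) x).differentiableWithinAt
    · intro x hx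
      have hd : HasDerivAt (fun y => y * Real.cosh y - Real.sinh y) (x * Real.sinh x) x := by
        have := ((hasDerivAt_id x).mul (Real.hasDerivAt_cosh x)).sub (Real.hasDerivAt_sinh x)
        exact this.congr_deriv (by simp only [id, one_mul]; ring)
      rw [hd.deriv]
      rw [interior_Ici, mem_Ioi] at hx
      exact mul_nonneg hx.le (by simpa using hx.le)
  have := key (self_mem_Ici) (mem_Ici.2 hy) hy
  simp at this; linarith

lemma gk_taylor {s : ℝ} (hs0 : 0 ≤ s) (hs1 : s ≤ 1) :
    |gk s - 4 * Real.exp (-1) * s| ≤ 32 * s ^ 2 := by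
  have hE : Real.exp (-1) ≤ 1 := Real.exp_le_one_iff.2 (by norm_num)
  have hE0 : 0 < Real.exp (-1) := Real.exp_pos _
  have hcosh1 : Real.cosh 1 ≤ 2 := by
    rw [Real.cosh_eq]
    have h1 : Real.exp 1 < 2.7182818286 := Real.exp_one_lt_d9
    have h2 : Real.exp (-1) ≤ 1 := hE
    linarith
  have hcoshs : Real.cosh s ≤ 2 := le_trans (by
    rw [Real.cosh_le_cosh]; rw [abs_of_nonneg hs0, abs_one]; exact hs1) hcosh1
  -- sinh 2s - 2s ≤ 16 s^3
  have hsinh2 : Real.sinh (2*s) ≤ 2*s + 16 * s^3 := by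
    have h1 : Real.sinh (2*s) ≤ (2*s) * Real.cosh (2*s) := sinh_le_mul_cosh (by linarith)
    have h2 : Real.cosh (2*s) = Real.cosh s ^ 2 + Real.sinh s ^ 2 := Real.cosh_two_mul s
    have h3 : Real.cosh s ^ 2 = Real.sinh s ^ 2 + 1 := Real.cosh_sq s
    have h4 : Real.sinh s ≤ s * Real.cosh s := sinh_le_mul_cosh hs0
    have h5 : 0 ≤ Real.sinh s := Real.sinh_nonneg_iff.2 hs0
    have h6 : 0 ≤ Real.cosh s := (Real.cosh_pos s).le
    have h7 : Real.sinh s ^ 2 ≤ (s * Real.cosh s) ^ 2 := by nlinarith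
    have hc2 : Real.cosh s ^ 2 ≤ 4 := by nlinarith
    have h8 : (s * Real.cosh s) ^ 2 ≤ 4 * s ^ 2 := by
      nlinarith [mul_le_mul_of_nonneg_left hc2 (sq_nonneg s)]
    nlinarith [mul_nonneg hs0 (sq_nonneg (Real.sinh s)), mul_le_mul_of_nonneg_left
      (show Real.sinh s ^ 2 ≤ 4 * s^2 from h7.trans h8) (show (0:ℝ) ≤ 2*s by linarith)]
  have hsinh_lb : 2*s ≤ Real.sinh (2*s) := Real.self_le_sinh_iff.2 (by linarith)
  have hexp_ub : Real.exp (-s^2) ≤ 1 := Real.exp_le_one_iff.2 (by nlinarith)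
  have hexp_lb : 1 - s^2 ≤ Real.exp (-s^2) := by
    have := Real.add_one_le_exp (-s^2); linarith
  have hexp_pos : 0 < Real.exp (-s^2) := Real.exp_pos _
  have hS0 : 0 ≤ Real.sinh (2*s) := le_trans (by linarith) hsinh_lb
  have hXS_ub : Real.exp (-s^2) * Real.sinh (2*s) ≤ 2*s + 16*s^3 := by
    nlinarith
  have hXS_lb : (1-s^2)*(2*s) ≤ Real.exp (-s^2) * Real.sinh (2*s) :=
    mul_le_mul hexp_lb hsinh_lb (by linarith) hexp_pos.le
  have hA := mul_le_mul_of_nonneg_left hXS_ub hE0.le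
  have hB := mul_le_mul_of_nonneg_left hXS_lb hE0.le
  have hs3 : 0 ≤ s^3 := by positivity
  have h9 : s^3 ≤ s^2 := by nlinarith
  rw [gk_eq, abs_le]
  constructor
  · nlinarith
  · nlinarith

lemma gk_continuous : Continuous gk := by
  unfold gk; fun_prop

def Jf (ε : ℝ) : ℝ := ∫ s in Ioi ε, gk s / s ^ 2

lemma gk_div_meas : Measurable (fun s : ℝ => gk s / s ^ 2) :=
  gk_continuous.measurable.div (measurable_id.pow_const 2)

lemma gk_div_le_rpow {ε x : ℝ} (hε : 0 < ε) (hx : x ∈ Ioi ε) :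
    ‖gk x / x ^ 2‖ ≤ x ^ (-2 : ℝ) := by
  have hx0 : 0 < x := hε.trans hx
  have h2 : x ^ (-2:ℝ) = (x ^ 2)⁻¹ := by
    rw [show (-2:ℝ) = -((2:ℕ):ℝ) by norm_num, Real.rpow_neg hx0.le, Real.rpow_natCast]
  rw [Real.norm_eq_abs, abs_div, abs_of_nonneg (gk_nonneg hx0.le),
    abs_of_nonneg (by positivity : (0:ℝ) ≤ x ^ 2), h2, div_le_iff₀ (by positivity),
    inv_mul_cancel₀ (by positivity : (x:ℝ)^2 ≠ 0)]
  exact gk_le_one x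

lemma integrableOn_gk_div {ε : ℝ} (hε : 0 < ε) :
    IntegrableOn (fun s => gk s / s ^ 2) (Ioi ε) := by
  have hb : IntegrableOn (fun x : ℝ => x ^ (-2:ℝ)) (Ioi ε) :=
    integrableOn_Ioi_rpow_of_lt (by norm_num) hε
  apply hb.mono' gk_div_meas.aestronglyMeasurable
  filter_upwards [ae_restrict_mem measurableSet_Ioi] with x hx
  exact gk_div_le_rpow hε hx

lemma tail_bound : |∫ s in Ioi (1:ℝ), gk s / s ^ 2| ≤ 1 := by
  have h1 : |∫ s in Ioi (1:ℝ), gk s / s ^ 2| ≤ ∫ s in Ioi (1:ℝ), s ^ (-2:ℝ) := by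
    rw [← Real.norm_eq_abs]
    apply norm_integral_le_of_norm_le (integrableOn_Ioi_rpow_of_lt (by norm_num) one_pos)
    filter_upwards [ae_restrict_mem measurableSet_Ioi] with x hx
    exact gk_div_le_rpow one_pos hx
  have h2 : ∫ s in Ioi (1:ℝ), s ^ (-2:ℝ) = 1 := by
    rw [integral_Ioi_rpow_of_lt (by norm_num) one_pos]; norm_num
  linarith

lemma Jf_asymp {ε : ℝ} (hε0 : 0 < ε) (hε1 : ε ≤ 1) :
    |Jf ε + 4 * Real.exp (-1) * Real.log ε| ≤ 33 := by
  have hsplit : Jf ε = (∫ s in Ioc ε 1, gk s / s ^ 2) + ∫ s in Ioi (1:ℝ), gk s / s ^ 2 := by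
    rw [Jf, ← setIntegral_union (Ioc_disjoint_Ioi le_rfl) measurableSet_Ioi
      ((integrableOn_gk_div hε0).mono_set Ioc_subset_Ioi_self) (integrableOn_gk_div one_pos),
      Ioc_union_Ioi_eq_Ioi hε1]
  have hmain : IntegrableOn (fun s => gk s / s ^ 2) (Ioc ε 1) :=
    (integrableOn_gk_div hε0).mono_set Ioc_subset_Ioi_self
  have hinv : IntegrableOn (fun s : ℝ => 4 * Real.exp (-1) * s⁻¹) (Ioc ε 1) := by
    have hc : ContinuousOn (fun s : ℝ => 4 * Real.exp (-1) * s⁻¹) (Icc ε 1) := by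
      apply ContinuousOn.mul continuousOn_const
      exact ContinuousOn.inv₀ continuousOn_id (fun x hx => by
        rcases hx with ⟨h1, h2⟩; exact ne_of_gt (lt_of_lt_of_le hε0 h1))
    exact (hc.integrableOn_compact isCompact_Icc).mono_set Ioc_subset_Icc_self
  have hsub := MeasureTheory.integral_sub hmain hinv
  have hlog : (∫ s in Ioc ε 1, 4 * Real.exp (-1) * s⁻¹) = -(4 * Real.exp (-1) * Real.log ε) := by
    rw [← intervalIntegral.integral_of_le hε1, intervalIntegral.integral_const_mul,
      integral_inv_of_pos hε0 one_pos, one_div, Real.log_inv]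
    ring
  have hrem : |∫ s in Ioc ε 1, (gk s / s ^ 2 - 4 * Real.exp (-1) * s⁻¹)| ≤ 32 := by
    rw [← Real.norm_eq_abs]
    have hb := norm_setIntegral_le_of_norm_le_const (μ := volume)
      (s := Ioc ε 1) (C := 32) (f := fun s => gk s / s ^ 2 - 4 * Real.exp (-1) * s⁻¹)
      (by rw [Real.volume_Ioc]; exact ENNReal.ofReal_lt_top)
      (fun x hx => by
        rcases hx with ⟨hx1, hx2⟩
        have hx0 : 0 < x := hε0.trans hx1
        have heq : gk x / x ^ 2 - 4 * Real.exp (-1) * x⁻¹ = (gk x - 4 * Real.exp (-1) * x) / x ^ 2 := by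
          field_simp
        show ‖gk x / x ^ 2 - 4 * Real.exp (-1) * x⁻¹‖ ≤ 32
        rw [Real.norm_eq_abs, heq, abs_div, abs_of_nonneg (by positivity : (0:ℝ) ≤ x ^ 2),
          div_le_iff₀ (by positivity)]
        calc |gk x - 4 * Real.exp (-1) * x| ≤ 32 * x ^ 2 := gk_taylor hx0.le hx2
          _ = 32 * x ^ 2 := rfl)
    refine hb.trans ?_
    rw [Real.volume_real_Ioc_of_le hε1]
    have : (ENNReal.ofReal (1 - ε)).toReal ≤ 1 := by
      rw [ENNReal.toReal_ofReal_eq_iff.2 (by linarith)] <;> linarith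
    nlinarith [ENNReal.toReal_nonneg (a := ENNReal.ofReal (1 - ε))]
  have htail := tail_bound
  have : Jf ε + 4 * Real.exp (-1) * Real.log ε =
      (∫ s in Ioc ε 1, (gk s / s ^ 2 - 4 * Real.exp (-1) * s⁻¹)) +
        ∫ s in Ioi (1:ℝ), gk s / s ^ 2 := by
    rw [hsub, hlog] at *
    rw [hsplit]; ring
  rw [this]
  calc |_ + _| ≤ |∫ s in Ioc ε 1, (gk s / s ^ 2 - 4 * Real.exp (-1) * s⁻¹)| +
        |∫ s in Ioi (1:ℝ), gk s / s ^ 2| := abs_add_le _ _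
    _ ≤ 33 := by linarith

lemma rpow_neg_two {x : ℝ} (hx : 0 < x) : x ^ (-2:ℝ) = (x ^ 2)⁻¹ := by
  rw [show (-2:ℝ) = -((2:ℕ):ℝ) by norm_num, Real.rpow_neg hx.le, Real.rpow_natCast]

def Afun (t : ℝ) : ℝ := ∫ y in Ioc (0:ℝ) 1, gk (y / (2 * Real.sqrt t))

lemma v₀_meas : Measurable v₀ :=
  Measurable.ite (measurableSet_le measurable_id measurable_const) measurable_const
    (measurable_const.div (measurable_id.pow_const 2))

lemma v₀_abs_le_one (y : ℝ) : |v₀ y| ≤ 1 := by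
  rw [v₀]
  split_ifs with h
  · simp
  · push_neg at h
    rw [abs_of_nonneg (by positivity)]
    rw [div_le_one (by nlinarith)]
    nlinarith

lemma v₀_eq_of_mem {y : ℝ} (hy : y ∈ Ioi (1:ℝ)) : v₀ y = 1 / y ^ 2 := by
  rw [v₀, if_neg (not_le.2 hy)]

lemma vheat_eq {t : ℝ} (ht : 0 < t) :
    vheat t (2 * Real.sqrt t) =
      (Real.sqrt (4 * Real.pi * t))⁻¹ *
        (Afun t + (2 * Real.sqrt t)⁻¹ * Jf ((2 * Real.sqrt t)⁻¹)) := by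
  unfold vheat
  set a := Real.sqrt t with ha_def
  have ha : 0 < a := Real.sqrt_pos.2 ht
  have ha2 : a ^ 2 = t := Real.sq_sqrt ht.le
  set c := (2 * a)⁻¹ with hc_def
  have hc : 0 < c := by positivity
  have hca : c * (2 * a) = 1 := inv_mul_cancel₀ (by positivity)
  have hker : ∀ y : ℝ,
      Real.exp (-(2 * a - y) ^ 2 / (4 * t)) - Real.exp (-(2 * a + y) ^ 2 / (4 * t))
        = gk (c * y) := by
    intro y
    have e1 : (1 - c * y) * (2 * a) = 2 * a - y := by linear_combination (-y) * hca
    have e2 : (1 + c * y) * (2 * a) = 2 * a + y := by linear_combination y * hca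
    have h1 : -(2 * a - y) ^ 2 / (4 * t) = -(1 - c * y) ^ 2 := by
      rw [← ha2, ← e1, div_eq_iff (by positivity : 4 * a ^ 2 ≠ 0)]; ring
    have h2 : -(2 * a + y) ^ 2 / (4 * t) = -(1 + c * y) ^ 2 := by
      rw [← ha2, ← e2, div_eq_iff (by positivity : 4 * a ^ 2 ≠ 0)]; ring
    rw [gk, h1, h2]
  have hmeas : Measurable fun y : ℝ => gk (c * y) * v₀ y :=
    (gk_continuous.measurable.comp (measurable_const.mul measurable_id)).mul v₀_meas
  have int1 : IntegrableOn (fun y => gk (c * y) * v₀ y) (Ioc (0:ℝ) 1) := by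
    apply Integrable.mono' (g := fun _ => (1:ℝ))
      (integrableOn_const (by rw [Real.volume_Ioc]; exact ENNReal.ofReal_ne_top))
      hmeas.aestronglyMeasurable
    filter_upwards [ae_restrict_mem measurableSet_Ioc] with y hy
    rw [Real.norm_eq_abs, abs_mul]
    have h1 : |gk (c * y)| ≤ 1 := by
      rw [abs_of_nonneg (gk_nonneg (mul_nonneg hc.le hy.1.le))]
      exact gk_le_one _
    exact mul_le_one₀ h1 (abs_nonneg _) (v₀_abs_le_one y)
  have int2 : IntegrableOn (fun y => gk (c * y) * v₀ y) (Ioi (1:ℝ)) := by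
    apply Integrable.mono' (integrableOn_Ioi_rpow_of_lt (by norm_num : (-2:ℝ) < -1) one_pos)
      hmeas.aestronglyMeasurable
    filter_upwards [ae_restrict_mem measurableSet_Ioi] with y hy
    have hy0 : (0:ℝ) < y := lt_trans one_pos hy
    rw [Real.norm_eq_abs, abs_mul, v₀_eq_of_mem hy, rpow_neg_two hy0]
    have h1 : |gk (c * y)| ≤ 1 := by
      rw [abs_of_nonneg (gk_nonneg (mul_nonneg hc.le hy0.le))]
      exact gk_le_one _
    have h2 : |1 / y ^ 2| = (y ^ 2)⁻¹ := by
      rw [abs_of_nonneg (by positivity)]; rw [one_div]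
    rw [h2]
    nlinarith [abs_nonneg (gk (c * y)), inv_pos.2 (show (0:ℝ) < y ^ 2 by positivity)]
  have key : (∫ y in Ioi (0:ℝ),
      (Real.exp (-(2 * a - y) ^ 2 / (4 * t)) - Real.exp (-(2 * a + y) ^ 2 / (4 * t))) * v₀ y)
      = Afun t + c * Jf c := by
    have step1 : (∫ y in Ioi (0:ℝ),
        (Real.exp (-(2 * a - y) ^ 2 / (4 * t)) - Real.exp (-(2 * a + y) ^ 2 / (4 * t))) * v₀ y)
        = ∫ y in Ioi (0:ℝ), gk (c * y) * v₀ y := by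
      simp only [hker]
    rw [step1, ← Ioc_union_Ioi_eq_Ioi (zero_le_one (α := ℝ)),
      setIntegral_union (Ioc_disjoint_Ioi le_rfl) measurableSet_Ioi int1 int2]
    have p1 : (∫ y in Ioc (0:ℝ) 1, gk (c * y) * v₀ y) = Afun t := by
      apply setIntegral_congr_fun measurableSet_Ioc
      intro y hy
      show gk (c * y) * v₀ y = gk (y / (2 * a))
      have : v₀ y = 1 := by rw [v₀, if_pos hy.2]
      rw [this, mul_one, hc_def]
      congr 1
      rw [div_eq_mul_inv, mul_comm]
    have p2 : (∫ y in Ioi (1:ℝ), gk (c * y) * v₀ y) = c * Jf c := by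
      have congr2 : (∫ y in Ioi (1:ℝ), gk (c * y) * v₀ y)
          = ∫ y in Ioi (1:ℝ), c ^ 2 * ((fun u => gk u / u ^ 2) (c * y)) := by
        apply setIntegral_congr_fun measurableSet_Ioi
        intro y hy
        have hy0 : (0:ℝ) < y := lt_trans one_pos hy
        show gk (c * y) * v₀ y = c ^ 2 * (gk (c * y) / (c * y) ^ 2)
        rw [v₀_eq_of_mem hy]
        field_simp
      rw [congr2, integral_const_mul,
        integral_comp_mul_left_Ioi (fun u => gk u / u ^ 2) 1 hc, smul_eq_mul, mul_one]
      rw [show (Jf c) = ∫ s in Ioi c, gk s / s ^ 2 from rfl]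
      field_simp
    rw [p1, p2]
  rw [key]

lemma Afun_bound {t : ℝ} (ht : 0 < t) : |Afun t| ≤ 2 / Real.sqrt t := by
  set a := Real.sqrt t with ha_def
  have ha : 0 < a := Real.sqrt_pos.2 ht
  have hb := norm_setIntegral_le_of_norm_le_const (μ := volume) (s := Ioc (0:ℝ) 1)
    (C := 2 / a) (f := fun y => gk (y / (2 * a)))
    (by rw [Real.volume_Ioc]; exact ENNReal.ofReal_lt_top)
    (fun y hy => by
      have hy0 : 0 < y := hy.1
      have hs : 0 ≤ y / (2 * a) := by positivity
      rw [Real.norm_eq_abs, abs_of_nonneg (gk_nonneg hs)]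
      calc gk (y / (2 * a)) ≤ 4 * (y / (2 * a)) := gk_le_linear hs
        _ ≤ 4 * (1 / (2 * a)) := by gcongr; exact hy.2
        _ = 2 / a := by field_simp; ring)
  refine le_trans hb ?_
  rw [Real.volume_real_Ioc_of_le zero_le_one]
  norm_num

/-- Equation (5.3): `v(t, 2√t) ∼ (e⁻¹/√π) (ln t)/(2t)` as `t → +∞`. -/
theorem vheat_asymptotics :
    Filter.Tendsto (fun t => vheat t (2 * Real.sqrt t) / (Real.log t / (2 * t)))
      Filter.atTop (nhds (Real.exp (-1) / Real.sqrt Real.pi)) := by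
  have hP : 0 < Real.sqrt Real.pi := Real.sqrt_pos.2 Real.pi_pos
  have hP1 : 1 ≤ Real.sqrt Real.pi := by
    rw [show (1:ℝ) = Real.sqrt 1 by simp]
    exact Real.sqrt_le_sqrt (by linarith [Real.pi_gt_three])
  have hE : Real.exp (-1) ≤ 1 := Real.exp_le_one_iff.2 (by norm_num)
  have hE0 : 0 < Real.exp (-1) := Real.exp_pos _
  have hlog2 : Real.log 2 ≤ 1 := by
    have := Real.log_le_sub_one_of_pos (show (0:ℝ) < 2 by norm_num); linarith
  have hlog2' : 0 ≤ Real.log 2 := Real.log_nonneg (by norm_num)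
  rw [← tendsto_sub_nhds_zero_iff]
  apply squeeze_zero_norm' (a := fun t => 40 / Real.log t)
  · filter_upwards [eventually_ge_atTop (3:ℝ)] with t ht3
    have ht : 0 < t := by linarith
    have ht1 : 1 < t := by linarith
    have hlog : 1 ≤ Real.log t := by
      rw [Real.le_log_iff_exp_le ht]
      have := Real.exp_one_lt_d9
      calc Real.exp 1 ≤ 2.7182818286 := this.le
        _ ≤ t := by linarith
    have hlogne : Real.log t ≠ 0 := by linarith
    set a := Real.sqrt t with ha_def
    have ha : 0 < a := Real.sqrt_pos.2 ht
    have ha1 : 1 < a := by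
      rw [ha_def]
      rw [show (1:ℝ) = Real.sqrt 1 by simp]
      exact Real.sqrt_lt_sqrt (by norm_num) ht1
    have ha2 : a ^ 2 = t := Real.sq_sqrt ht.le
    have hε0 : 0 < (2*a)⁻¹ := by positivity
    have hε1 : (2*a)⁻¹ ≤ 1 := by
      rw [inv_le_one_iff₀]; right; linarith
    have hJ := Jf_asymp hε0 hε1
    have hA := Afun_bound ht
    have hsq : Real.sqrt (4 * Real.pi * t) = 2 * Real.sqrt Real.pi * a := by
      rw [show 4 * Real.pi * t = (2 * Real.sqrt Real.pi * a)^2 by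
        rw [show (2 * Real.sqrt Real.pi * a)^2 = 4 * (Real.sqrt Real.pi^2) * a^2 by ring,
          Real.sq_sqrt Real.pi_pos.le, ha2]]
      exact Real.sqrt_sq (by positivity)
    have hlogε : Real.log ((2*a)⁻¹) = -(Real.log 2 + Real.log t / 2) := by
      rw [Real.log_inv, Real.log_mul (by norm_num) (ne_of_gt ha), ha_def, Real.log_sqrt ht.le]
    set R := Jf ((2*a)⁻¹) + 4 * Real.exp (-1) * Real.log ((2*a)⁻¹) with hR_def
    have hRb : |R| ≤ 33 := hJ
    have hJf : Jf ((2*a)⁻¹) =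
        R + 4 * Real.exp (-1) * Real.log 2 + 2 * Real.exp (-1) * Real.log t := by
      rw [hR_def, hlogε]; ring
    have keyeq : vheat t (2 * Real.sqrt t) / (Real.log t / (2 * t)) -
          Real.exp (-1) / Real.sqrt Real.pi
        = Afun t * a / (Real.sqrt Real.pi * Real.log t) +
          (R + 4 * Real.exp (-1) * Real.log 2) / (2 * Real.sqrt Real.pi * Real.log t) := by
      rw [vheat_eq ht, hsq, hJf, show (2:ℝ) * t = 2 * a^2 by rw [ha2]]
      field_simp
      ring
    rw [Real.norm_eq_abs, keyeq]
    have h1 : |Afun t * a / (Real.sqrt Real.pi * Real.log t)| ≤ 2 / Real.log t := by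
      rw [abs_div, abs_mul, abs_of_pos ha,
        abs_of_pos (by positivity : 0 < Real.sqrt Real.pi * Real.log t)]
      have hnum : |Afun t| * a ≤ 2 := by
        have := mul_le_mul_of_nonneg_right hA ha.le
        rw [div_mul_cancel₀] at this
        · exact this
        · exact ne_of_gt ha
      calc |Afun t| * a / (Real.sqrt Real.pi * Real.log t)
          ≤ 2 / (Real.sqrt Real.pi * Real.log t) := by gcongr
        _ ≤ 2 / Real.log t := by
            apply div_le_div_of_nonneg_left (by norm_num) (by linarith) ?_
            nlinarith
    have h2 : |(R + 4 * Real.exp (-1) * Real.log 2) / (2 * Real.sqrt Real.pi * Real.log t)|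
        ≤ 37 / Real.log t := by
      rw [abs_div, abs_of_pos (by positivity : 0 < 2 * Real.sqrt Real.pi * Real.log t)]
      have hnum : |R + 4 * Real.exp (-1) * Real.log 2| ≤ 37 := by
        have h4 : 4 * Real.exp (-1) * Real.log 2 ≤ 4 := by nlinarith
        have h5 : 0 ≤ 4 * Real.exp (-1) * Real.log 2 := by positivity
        have := abs_add_le R (4 * Real.exp (-1) * Real.log 2)
        rw [abs_of_nonneg h5] at this
        linarith
      calc |R + 4 * Real.exp (-1) * Real.log 2| / (2 * Real.sqrt Real.pi * Real.log t)
          ≤ 37 / (2 * Real.sqrt Real.pi * Real.log t) := by gcongr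
        _ ≤ 37 / Real.log t := by
            apply div_le_div_of_nonneg_left (by norm_num) (by linarith) ?_
            nlinarith
    calc |Afun t * a / (Real.sqrt Real.pi * Real.log t) +
          (R + 4 * Real.exp (-1) * Real.log 2) / (2 * Real.sqrt Real.pi * Real.log t)|
        ≤ |Afun t * a / (Real.sqrt Real.pi * Real.log t)| +
          |(R + 4 * Real.exp (-1) * Real.log 2) / (2 * Real.sqrt Real.pi * Real.log t)| :=
          abs_add_le _ _
      _ ≤ 2 / Real.log t + 37 / Real.log t := by linarith
      _ ≤ 40 / Real.log t := by
          rw [← add_div]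
          gcongr
          norm_num
  · exact tendsto_const_nhds.div_atTop Real.tendsto_log_atTop
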